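/- If A is an n×n real symmetric matrix and B is an m×m principal submatrix of A (m ≤ n), then for each i with 1 ≤ i ≤ m, the eigenvalues satisfy λ_{n-m+i}(A) ≤ μ_i(B) ≤ λ_i(A), where eigenvalues are listed in nonincreasing order (Cauchy interlacing). -/

import Mathlib

noncomputable def sortedEigenvalues {ι : Type*} [Fintype ι] [DecidableEq ι]
    (A : Matrix ι ι ℝ) (hA : A.IsHermitian) : List ℝ :=
  (Finset.univ.val.map hA.eigenvalues).sort (· ≤ ·)

/-- `eig A hA k` is the `k`-th largest eigenvalue of `A` (1-indexed). -/
noncomputable def eig {ι : Type*} [Fintype ι] [DecidableEq ι]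
    (A : Matrix ι ι ℝ) (hA : A.IsHermitian) (k : ℕ) : ℝ :=
  (sortedEigenvalues A hA)[Fintype.card ι - k]!

section Interlacing

open Matrix Submodule Module

/-! ### Sorted eigenvalues via `Tuple.sort` -/

lemma sortedEigenvalues_eq_ofFn {N : ℕ} (A : Matrix (Fin N) (Fin N) ℝ) (hA : A.IsHermitian) :
    sortedEigenvalues A hA = List.ofFn (hA.eigenvalues ∘ Tuple.sort hA.eigenvalues) := by
  refine (fun h1 h2 h3 => List.Perm.eq_of_pairwise' (r := (· ≤ ·)) h2 h3 h1) ?_ ?_ ?_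
  · rw [← Multiset.coe_eq_coe]
    show ((Finset.univ.val.map hA.eigenvalues).sort (· ≤ ·) : Multiset ℝ) = _
    rw [Multiset.sort_eq]
    rw [List.ofFn_eq_map]
    have : (List.finRange N).map (hA.eigenvalues ∘ Tuple.sort hA.eigenvalues)
        = ((List.finRange N).map (Tuple.sort hA.eigenvalues)).map hA.eigenvalues := by
      rw [List.map_map]
    rw [this]
    show _ = Multiset.map hA.eigenvalues
      (((List.finRange N).map (Tuple.sort hA.eigenvalues) : List (Fin N)) : Multiset (Fin N))
    congr 1
    have := Finset.map_univ_equiv (Tuple.sort hA.eigenvalues)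
    have h2 := congr_arg Finset.val this
    simpa [Finset.univ, Fintype.elems, List.finRange] using h2.symm
  · exact Multiset.pairwise_sort _ _
  · exact (Tuple.monotone_sort hA.eigenvalues).sortedLE_ofFn.pairwise

lemma eig_eq {N : ℕ} (A : Matrix (Fin N) (Fin N) ℝ) (hA : A.IsHermitian) {k : ℕ}
    (hk1 : 1 ≤ k) (hk2 : k ≤ N) :
    eig A hA k = hA.eigenvalues (Tuple.sort hA.eigenvalues ⟨N - k, by omega⟩) := by
  have hlt : N - k < (sortedEigenvalues A hA).length := by
    rw [sortedEigenvalues_eq_ofFn, List.length_ofFn]; omega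
  rw [eig, Fintype.card_fin, getElem!_pos (sortedEigenvalues A hA) (N - k) hlt]
  simp only [sortedEigenvalues_eq_ofFn, List.getElem_ofFn, Function.comp_apply]

/-! ### Rayleigh quotient bounds on spectral subspaces -/

variable {ι : Type*} [Fintype ι] [DecidableEq ι] {M : Matrix ι ι ℝ}

/-- The eigenvectors of a Hermitian matrix as plain functions. -/
noncomputable def evec (hM : M.IsHermitian) : ι → (ι → ℝ) := fun j => ⇑(hM.eigenvectorBasis j)

lemma quad_expand (hM : M.IsHermitian) (x : ι → ℝ) :
    x ⬝ᵥ (M *ᵥ x) = ∑ j, hM.eigenvalues j *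
      (((star (hM.eigenvectorUnitary : Matrix ι ι ℝ)) *ᵥ x) j)^2 := by
  set U : Matrix ι ι ℝ := (hM.eigenvectorUnitary : Matrix ι ι ℝ) with hU
  have hsu : star U = Uᵀ := by
    rw [Matrix.star_eq_conjTranspose]; ext i j; simp [Matrix.conjTranspose_apply]
  conv_lhs => rw [hM.spectral_theorem, Unitary.conjStarAlgAut_apply]
  rw [← Matrix.mulVec_mulVec, ← Matrix.mulVec_mulVec, Matrix.dotProduct_mulVec (A := U)]
  rw [show x ᵥ* U = Uᵀ *ᵥ x from (Matrix.mulVec_transpose U x).symm]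
  rw [← hsu, ← hU]
  rw [dotProduct]
  apply Finset.sum_congr rfl
  intro j _
  rw [Matrix.mulVec_diagonal]
  simp [Function.comp]
  ring

lemma normsum_expand (hM : M.IsHermitian) (x : ι → ℝ) :
    x ⬝ᵥ x = ∑ j, (((star (hM.eigenvectorUnitary : Matrix ι ι ℝ)) *ᵥ x) j)^2 := by
  set U : Matrix ι ι ℝ := (hM.eigenvectorUnitary : Matrix ι ι ℝ) with hU
  have hsu : star U = Uᵀ := by
    rw [Matrix.star_eq_conjTranspose]; ext i j; simp [Matrix.conjTranspose_apply]
  have h1 : U * star U = 1 := Matrix.mem_unitaryGroup_iff.mp hM.eigenvectorUnitary.2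
  calc x ⬝ᵥ x = x ⬝ᵥ ((U * star U) *ᵥ x) := by rw [h1, Matrix.one_mulVec]
    _ = (star U *ᵥ x) ⬝ᵥ (star U *ᵥ x) := by
        rw [← Matrix.mulVec_mulVec, Matrix.dotProduct_mulVec (A := U),
          show x ᵥ* U = Uᵀ *ᵥ x from (Matrix.mulVec_transpose U x).symm, ← hsu]
    _ = ∑ j, ((star U *ᵥ x) j)^2 := by
        rw [dotProduct]; exact Finset.sum_congr rfl fun j _ => (sq _).symm

lemma coord_zero (hM : M.IsHermitian) {S : Set ι} {x : ι → ℝ}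
    (hx : x ∈ span ℝ (evec hM '' S))
    {j : ι} (hj : j ∉ S) : ((star (hM.eigenvectorUnitary : Matrix ι ι ℝ)) *ᵥ x) j = 0 := by
  set U : Matrix ι ι ℝ := (hM.eigenvectorUnitary : Matrix ι ι ℝ)
  let φ : (ι → ℝ) →ₗ[ℝ] ℝ := (LinearMap.proj j).comp (Matrix.mulVecLin (star U))
  have key : ∀ y ∈ span ℝ (evec hM '' S), φ y = 0 := by
    intro y hy
    induction hy using Submodule.span_induction with
    | mem y hy =>
        obtain ⟨i, hiS, rfl⟩ := hy
        have h : (star U) *ᵥ evec hM i = Pi.single i 1 :=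
          hM.star_eigenvectorUnitary_mulVec i
        show ((star U) *ᵥ evec hM i) j = 0
        rw [h]
        exact Pi.single_eq_of_ne (fun h : j = i => hj (h ▸ hiS)) 1
    | zero => simp
    | add y z _ _ hy hz => simp [map_add, hy, hz]
    | smul a y _ hy => simp [_root_.map_smul, hy]
  exact key x hx

lemma quad_le_of_mem_span (hM : M.IsHermitian) {S : Finset ι} {c : ℝ}
    (hc : ∀ j ∈ S, hM.eigenvalues j ≤ c)
    {x : ι → ℝ} (hx : x ∈ span ℝ (evec hM '' (S : Set ι))) :
    x ⬝ᵥ (M *ᵥ x) ≤ c * (x ⬝ᵥ x) := by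
  rw [quad_expand hM, normsum_expand hM, Finset.mul_sum]
  apply Finset.sum_le_sum
  intro j _
  by_cases hj : j ∈ S
  · exact mul_le_mul_of_nonneg_right (hc j hj) (sq_nonneg _)
  · rw [coord_zero hM hx hj]; simp

lemma quad_ge_of_mem_span (hM : M.IsHermitian) {S : Finset ι} {c : ℝ}
    (hc : ∀ j ∈ S, c ≤ hM.eigenvalues j)
    {x : ι → ℝ} (hx : x ∈ span ℝ (evec hM '' (S : Set ι))) :
    c * (x ⬝ᵥ x) ≤ x ⬝ᵥ (M *ᵥ x) := by
  rw [quad_expand hM, normsum_expand hM, Finset.mul_sum]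
  apply Finset.sum_le_sum
  intro j _
  by_cases hj : j ∈ S
  · exact mul_le_mul_of_nonneg_right (hc j hj) (sq_nonneg _)
  · rw [coord_zero hM hx hj]; simp

lemma evec_linearIndependent (hM : M.IsHermitian) : LinearIndependent ℝ (evec hM) := by
  have h : LinearIndependent ℝ (fun i : ι => (Pi.single i 1 : ι → ℝ)) := by
    have := (Pi.basisFun ℝ ι).linearIndependent
    have he : ⇑(Pi.basisFun ℝ ι) = fun i : ι => (Pi.single i 1 : ι → ℝ) := by
      funext i; ext j; simp [Pi.basisFun_apply]
    rwa [he] at this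
  apply LinearIndependent.of_comp
    (Matrix.mulVecLin (star (hM.eigenvectorUnitary : Matrix ι ι ℝ)))
  have : (Matrix.mulVecLin (star (hM.eigenvectorUnitary : Matrix ι ι ℝ))) ∘ (evec hM)
      = fun i : ι => (Pi.single i 1 : ι → ℝ) := by
    funext i
    exact hM.star_eigenvectorUnitary_mulVec i
  rw [this]
  exact h

lemma finrank_span_evec (hM : M.IsHermitian) (T : Finset ι) :
    Module.finrank ℝ (span ℝ (evec hM '' (T : Set ι))) = T.card := by
  have himg : evec hM '' (T : Set ι) = Set.range (fun j : (T : Set ι) => evec hM j) :=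
    (Set.image_eq_range _ _)
  rw [himg]
  have hli : LinearIndependent ℝ (fun j : (T : Set ι) => evec hM j) :=
    (evec_linearIndependent hM).comp _ Subtype.val_injective
  rw [finrank_span_eq_card hli]
  simp

/-! ### The lifting map along an injection -/

noncomputable def liftMap {m n : ℕ} (f : Fin m → Fin n) : (Fin m → ℝ) →ₗ[ℝ] (Fin n → ℝ) where
  toFun x := fun k => ∑ l, if k = f l then x l else 0
  map_add' x y := by
    funext k
    simp only [Pi.add_apply, ← Finset.sum_add_distrib]
    apply Finset.sum_congr rfl
    intro l _
    split <;> simp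
  map_smul' a x := by
    funext k
    simp only [Pi.smul_apply, RingHom.id_apply, smul_eq_mul, Finset.mul_sum]
    apply Finset.sum_congr rfl
    intro l _
    split <;> simp

variable {m n : ℕ} {f : Fin m → Fin n}

lemma liftMap_apply_f (hf : Function.Injective f) (x : Fin m → ℝ) (l : Fin m) :
    liftMap f x (f l) = x l := by
  show (∑ l', if f l = f l' then x l' else 0) = x l
  simp [hf.eq_iff]

lemma dot_liftMap (x : Fin m → ℝ) (w : Fin n → ℝ) :
    liftMap f x ⬝ᵥ w = ∑ l, x l * w (f l) := by
  show (∑ k, (∑ l, if k = f l then x l else 0) * w k) = _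
  simp only [Finset.sum_mul, ite_mul, zero_mul]
  rw [Finset.sum_comm]
  apply Finset.sum_congr rfl
  intro l _
  simp

lemma liftMap_dot_mulVec (A : Matrix (Fin n) (Fin n) ℝ) (x y : Fin m → ℝ) :
    liftMap f x ⬝ᵥ (A *ᵥ liftMap f y) = x ⬝ᵥ ((A.submatrix f f) *ᵥ y) := by
  rw [dot_liftMap]
  apply Finset.sum_congr rfl
  intro l _
  congr 1
  have h1 : (A *ᵥ liftMap f y) (f l) = liftMap f y ⬝ᵥ (fun k => A (f l) k) := by
    rw [Matrix.mulVec, dotProduct_comm]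
  rw [h1, dot_liftMap]
  show _ = (fun j => A (f l) (f j)) ⬝ᵥ y
  rw [dotProduct]
  apply Finset.sum_congr rfl
  intro l' _
  ring

lemma liftMap_dot_liftMap (hf : Function.Injective f) (x y : Fin m → ℝ) :
    liftMap f x ⬝ᵥ liftMap f y = x ⬝ᵥ y := by
  rw [dot_liftMap]
  apply Finset.sum_congr rfl
  intro l _
  rw [liftMap_apply_f hf]

lemma liftMap_injective (hf : Function.Injective f) :
    Function.Injective (liftMap f (n := n)) := by
  intro x y h
  funext l
  have := congrFun h (f l)
  rwa [liftMap_apply_f hf, liftMap_apply_f hf] at this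

/-! ### Dimension counting -/

lemma exists_ne_zero_mem_inf {V W : Submodule ℝ (Fin n → ℝ)}
    (h : n < finrank ℝ V + finrank ℝ W) : ∃ x, x ≠ 0 ∧ x ∈ V ∧ x ∈ W := by
  have h1 := Submodule.finrank_sup_add_finrank_inf_eq V W
  have h2 : finrank ℝ ↥(V ⊔ W) ≤ n := by
    have := Submodule.finrank_le (V ⊔ W)
    rwa [Module.finrank_fin_fun] at this
  have h3 : 0 < finrank ℝ ↥(V ⊓ W) := by omega
  obtain ⟨⟨x, hx⟩, hx0⟩ := Module.finrank_pos_iff_exists_ne_zero.mp h3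
  refine ⟨x, ?_, hx.1, hx.2⟩
  intro hc
  exact hx0 (by simp [hc])

/-! ### The key comparison lemmas -/

lemma key_le (A : Matrix (Fin n) (Fin n) ℝ) (hA : A.IsHermitian)
    (hf : Function.Injective f) (hB : (A.submatrix f f).IsHermitian)
    (S : Finset (Fin m)) (T : Finset (Fin n)) (hcard : n < S.card + T.card)
    {a b : ℝ} (hS : ∀ j ∈ S, b ≤ hB.eigenvalues j) (hT : ∀ j ∈ T, hA.eigenvalues j ≤ a) :
    b ≤ a := by
  set V : Submodule ℝ (Fin n → ℝ) := (span ℝ (evec hB '' (S : Set (Fin m)))).map (liftMap f)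
  set W : Submodule ℝ (Fin n → ℝ) := span ℝ (evec hA '' (T : Set (Fin n)))
  have hV : finrank ℝ V = S.card := by
    rw [← (Submodule.equivMapOfInjective (liftMap f) (liftMap_injective hf) _).finrank_eq]
    exact finrank_span_evec hB S
  have hW : finrank ℝ W = T.card := finrank_span_evec hA T
  obtain ⟨x, hx0, hxV, hxW⟩ := exists_ne_zero_mem_inf (V := V) (W := W) (by omega)
  obtain ⟨y, hy, rfl⟩ := Submodule.mem_map.mp hxV
  have hy0 : y ≠ 0 := by rintro rfl; exact hx0 (map_zero _)
  have hyy : 0 < y ⬝ᵥ y := by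
    have hs : y ⬝ᵥ y = y ⬝ᵥ star y := by simp [dotProduct]
    rw [hs]
    exact Matrix.dotProduct_self_star_pos_iff.mpr hy0
  have hchain : b * (y ⬝ᵥ y) ≤ a * (y ⬝ᵥ y) := by
    calc b * (y ⬝ᵥ y) ≤ y ⬝ᵥ ((A.submatrix f f) *ᵥ y) := quad_ge_of_mem_span hB hS hy
      _ = liftMap f y ⬝ᵥ (A *ᵥ liftMap f y) := (liftMap_dot_mulVec A y y).symm
      _ ≤ a * (liftMap f y ⬝ᵥ liftMap f y) := quad_le_of_mem_span hA hT hxW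
      _ = a * (y ⬝ᵥ y) := by rw [liftMap_dot_liftMap hf]
  exact (mul_le_mul_iff_of_pos_right hyy).mp hchain

lemma key_ge (A : Matrix (Fin n) (Fin n) ℝ) (hA : A.IsHermitian)
    (hf : Function.Injective f) (hB : (A.submatrix f f).IsHermitian)
    (S : Finset (Fin m)) (T : Finset (Fin n)) (hcard : n < S.card + T.card)
    {a b : ℝ} (hS : ∀ j ∈ S, hB.eigenvalues j ≤ b) (hT : ∀ j ∈ T, a ≤ hA.eigenvalues j) :
    a ≤ b := by
  set V : Submodule ℝ (Fin n → ℝ) := (span ℝ (evec hB '' (S : Set (Fin m)))).map (liftMap f)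
  set W : Submodule ℝ (Fin n → ℝ) := span ℝ (evec hA '' (T : Set (Fin n)))
  have hV : finrank ℝ V = S.card := by
    rw [← (Submodule.equivMapOfInjective (liftMap f) (liftMap_injective hf) _).finrank_eq]
    exact finrank_span_evec hB S
  have hW : finrank ℝ W = T.card := finrank_span_evec hA T
  obtain ⟨x, hx0, hxV, hxW⟩ := exists_ne_zero_mem_inf (V := V) (W := W) (by omega)
  obtain ⟨y, hy, rfl⟩ := Submodule.mem_map.mp hxV
  have hy0 : y ≠ 0 := by rintro rfl; exact hx0 (map_zero _)
  have hyy : 0 < y ⬝ᵥ y := by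
    have hs : y ⬝ᵥ y = y ⬝ᵥ star y := by simp [dotProduct]
    rw [hs]
    exact Matrix.dotProduct_self_star_pos_iff.mpr hy0
  have hchain : a * (y ⬝ᵥ y) ≤ b * (y ⬝ᵥ y) := by
    calc a * (y ⬝ᵥ y) = a * (liftMap f y ⬝ᵥ liftMap f y) := by rw [liftMap_dot_liftMap hf]
      _ ≤ liftMap f y ⬝ᵥ (A *ᵥ liftMap f y) := quad_ge_of_mem_span hA hT hxW
      _ = y ⬝ᵥ ((A.submatrix f f) *ᵥ y) := liftMap_dot_mulVec A y y
      _ ≤ b * (y ⬝ᵥ y) := quad_le_of_mem_span hB hS hy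
  exact (mul_le_mul_iff_of_pos_right hyy).mp hchain

end Interlacing

theorem cauchy_interlacing {n m : ℕ} (hmn : m ≤ n)
    (A : Matrix (Fin n) (Fin n) ℝ) (hA : A.IsHermitian)
    (f : Fin m → Fin n) (hf : Function.Injective f)
    (hB : (A.submatrix f f).IsHermitian) :
    ∀ i : ℕ, 1 ≤ i → i ≤ m →
      eig A hA (n - m + i) ≤ eig (A.submatrix f f) hB i ∧
      eig (A.submatrix f f) hB i ≤ eig A hA i := by
  intro i hi1 him
  have hm0 : 0 < m := by omega
  have hn0 : 0 < n := by omega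
  set σA := Tuple.sort hA.eigenvalues with hσA
  set σB := Tuple.sort hB.eigenvalues with hσB
  have hmonoA : Monotone (hA.eigenvalues ∘ σA) := Tuple.monotone_sort _
  have hmonoB : Monotone (hB.eigenvalues ∘ σB) := Tuple.monotone_sort _
  constructor
  · -- lower bound: eig A (n - m + i) ≤ eig B i
    have h1 : (1 : ℕ) ≤ n - m + i := by omega
    have h2 : n - m + i ≤ n := by omega
    rw [eig_eq A hA h1 h2, eig_eq (A.submatrix f f) hB hi1 him]
    have hidx : n - (n - m + i) = m - i := by omega
    set p : Fin m := ⟨m - i, by omega⟩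
    set q : Fin n := ⟨m - i, by omega⟩
    have hq : (⟨n - (n - m + i), by omega⟩ : Fin n) = q := by
      apply Fin.ext; simp [q, hidx]
    rw [hq]
    apply key_ge A hA hf hB (Finset.image σB (Finset.Iic p)) (Finset.image σA (Finset.Ici q))
    · rw [Finset.card_image_of_injective _ σB.injective,
        Finset.card_image_of_injective _ σA.injective, Fin.card_Iic, Fin.card_Ici]
      show n < (m - i) + 1 + (n - (m - i))
      omega
    · intro j hj
      obtain ⟨l, hl, rfl⟩ := Finset.mem_image.mp hj
      exact hmonoB (Finset.mem_Iic.mp hl)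
    · intro j hj
      obtain ⟨l, hl, rfl⟩ := Finset.mem_image.mp hj
      exact hmonoA (Finset.mem_Ici.mp hl)
  · -- upper bound: eig B i ≤ eig A i
    have h2 : i ≤ n := le_trans him hmn
    rw [eig_eq A hA hi1 h2, eig_eq (A.submatrix f f) hB hi1 him]
    set p : Fin m := ⟨m - i, by omega⟩
    set q : Fin n := ⟨n - i, by omega⟩
    apply key_le A hA hf hB (Finset.image σB (Finset.Ici p)) (Finset.image σA (Finset.Iic q))
    · rw [Finset.card_image_of_injective _ σB.injective,
        Finset.card_image_of_injective _ σA.injective, Fin.card_Ici, Fin.card_Iic]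
      show n < (m - (m - i)) + ((n - i) + 1)
      omega
    · intro j hj
      obtain ⟨l, hl, rfl⟩ := Finset.mem_image.mp hj
      exact hmonoB (Finset.mem_Ici.mp hl)
    · intro j hj
      obtain ⟨l, hl, rfl⟩ := Finset.mem_image.mp hj
      exact hmonoA (Finset.mem_Iic.mp hl)
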